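/- For all real N ≥ 2, all integers K ≥ 2, and all ε ≥ 0, the ratio of the AL-PIR upper-bound constants satisfies ((1 + 1/(N-1)) · (1/((N·e^ε)^(K-1) - 1))) / ((1 + 1/(N·e^ε - 1)) · (e^ε/(N^(K-1) - 1))) ≤ e^(-2ε) ≤ 1. -/

import Mathlib

theorem stmt_0 (N ε : ℝ) (K : ℕ) (hN : 2 ≤ N) (hK : 2 ≤ K) (hε : 0 ≤ ε) :
    ((1 + 1/(N-1)) * (1/((N * Real.exp ε)^(K-1) - 1))) /
      ((1 + 1/(N * Real.exp ε - 1)) * (Real.exp ε/(N^(K-1) - 1)))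
      ≤ Real.exp (-(2*ε)) ∧ Real.exp (-(2*ε)) ≤ 1 := by
  constructor
  · set E := Real.exp ε with hEdef
    have hE : 1 ≤ E := Real.one_le_exp hε
    have hE0 : (0:ℝ) < E := lt_of_lt_of_le one_pos hE
    have hNM : N ≤ N * E := le_mul_of_one_le_right (by linarith) hE
    have hM2 : (2:ℝ) ≤ N * E := le_trans hN hNM
    set m := K - 1 with hm
    have hm1 : 1 ≤ m := by omega
    set S := ∑ i ∈ Finset.range m, N ^ i with hS
    set T := ∑ i ∈ Finset.range m, (N * E) ^ i with hT
    have hST : S ≤ T :=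
      Finset.sum_le_sum (fun i _ => pow_le_pow_left₀ (by linarith) hNM i)
    have hS1 : 1 ≤ S := by
      have := Finset.single_le_sum (f := fun i => N ^ i)
        (fun i _ => by positivity) (Finset.mem_range.mpr (by omega : 0 < m))
      simpa using this
    have hT1 : 1 ≤ T := le_trans hS1 hST
    have hNpow : N ^ m - 1 = S * (N - 1) := (geom_sum_mul N m).symm
    have hMpow : (N * E) ^ m - 1 = T * (N * E - 1) := (geom_sum_mul (N * E) m).symm
    have hexp : Real.exp (-(2*ε)) = 1 / (E * E) := by
      rw [Real.exp_neg, two_mul, Real.exp_add, ← hEdef, one_div]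
    have h1 : (0:ℝ) < N - 1 := by linarith
    have h2 : (0:ℝ) < N * E - 1 := by linarith
    have hT0 : (0:ℝ) < T := by linarith
    have hS0 : (0:ℝ) < S := by linarith
    rw [hexp, hNpow, hMpow]
    have heq : ((1 + 1/(N-1)) * (1/(T * (N * E - 1)))) /
        ((1 + 1/(N * E - 1)) * (E/(S * (N - 1)))) = S / (T * (E * E)) := by
      have e1 : (1 + 1/(N-1)) = N / (N - 1) := by field_simp; ring
      have e2 : (1 + 1/(N * E - 1)) = (N * E) / (N * E - 1) := by field_simp; ring
      rw [e1, e2]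
      field_simp
    rw [heq, div_le_div_iff₀ (by positivity) (by positivity)]
    nlinarith [mul_pos hE0 hE0]
  · rw [← Real.exp_zero]
    exact Real.exp_le_exp.mpr (by nlinarith)
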